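/- In a directed graph g with source s, for any vertex u ≠ s, the number of vertices w such that w is reachable from s and every path from s to w passes through u equals the number of vertices in the subtree rooted at u in the dominator tree of g with respect to s. -/

import Mathlib

/-!
Dominators in a directed graph `g : V → V → Prop` with a source vertex `s`.
-/

open Finset

noncomputable section
open scoped Classical

variable {V : Type*}

/-- `w` is reachable from `s` in the directed graph `g`. -/
def Reach (g : V → V → Prop) (s w : V) : Prop :=
  Relation.ReflTransGen g s w

/-- `w` is reachable from `s` in `g` by a path avoiding the vertex `u`. -/
def ReachAvoid (g : V → V → Prop) (u s w : V) : Prop :=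
  Relation.ReflTransGen (fun a b => g a b ∧ a ≠ u ∧ b ≠ u) s w

/-- `u` dominates `v` (w.r.t. source `s`): `v` is reachable from `s` and every
path from `s` to `v` passes through `u`. -/
def Dominates (g : V → V → Prop) (s u v : V) : Prop :=
  Reach g s v ∧ (u = v ∨ ¬ ReachAvoid g u s v)

/-- `u` is the immediate dominator of `v`: `u` is a dominator of `v` other than
`v`, and every other dominator of `v` dominates `u`. -/
def IsIdom (g : V → V → Prop) (s u v : V) : Prop :=
  Dominates g s u v ∧ u ≠ v ∧ ∀ w, Dominates g s w v → w ≠ v → Dominates g s w u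

/-- `v` lies in the subtree rooted at `u` of the dominator tree of `g` with
source `s` (i.e. `u` is an ancestor of `v`, or `v` itself, along immediate
dominator edges). -/
def InDomSubtree (g : V → V → Prop) (s u v : V) : Prop :=
  Relation.ReflTransGen (fun a b => IsIdom g s a b) u v

/-! ### Auxiliary lemmas -/

/-- `P` is the vertex list of a path in `g` from `s` to `w`. -/
def GoodPath (g : V → V → Prop) (s w : V) (P : List V) : Prop :=
  P.Chain' g ∧ P.head? = some s ∧ P.getLast? = some w

section Aux

variable {g : V → V → Prop} {s u w : V}

lemma goodPath_exists_cons {P : List V} (h : GoodPath g s w P) :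
    ∃ l, P = s :: l := by
  obtain ⟨-, h2, -⟩ := h
  cases P with
  | nil => simp at h2
  | cons a l =>
    simp only [List.head?_cons, Option.some.injEq] at h2
    exact ⟨l, by rw [h2]⟩

lemma reach_of_path {P : List V} (h : GoodPath g s w P) : Reach g s w := by
  obtain ⟨l, rfl⟩ := goodPath_exists_cons h
  have h1 : List.Chain g s l := h.1
  have h2 : (s :: l).getLast (List.cons_ne_nil _ _) = w := by
    have := h.2.2
    rw [List.getLast?_eq_getLast (l := s :: l) (List.cons_ne_nil _ _)] at this
    exact (Option.some.injEq _ _ ▸ this)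
  exact List.relationReflTransGen_of_exists_isChain_cons l h1 h2

lemma path_of_reach (h : Reach g s w) : ∃ P, GoodPath g s w P := by
  obtain ⟨l, hl, hlast⟩ := List.exists_isChain_cons_of_relationReflTransGen h
  refine ⟨s :: l, hl, rfl, ?_⟩
  rw [List.getLast?_eq_getLast (l := s :: l) (List.cons_ne_nil _ _), hlast]

lemma reachAvoid_of_path {P : List V} (h : GoodPath g s w P) (hu : u ∉ P) :
    ReachAvoid g u s w := by
  obtain ⟨l, rfl⟩ := goodPath_exists_cons h
  have h1 : List.Chain g s l := h.1
  have h2 : (s :: l).getLast (List.cons_ne_nil _ _) = w := by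
    have := h.2.2
    rw [List.getLast?_eq_getLast (l := s :: l) (List.cons_ne_nil _ _)] at this
    exact (Option.some.injEq _ _ ▸ this)
  have key : ∀ (a : V) (l : List V), List.Chain g a l → u ∉ a :: l →
      List.Chain (fun a b => g a b ∧ a ≠ u ∧ b ≠ u) a l := by
    intro a l
    induction l generalizing a with
    | nil => intro _ _; exact List.Chain.nil
    | cons b l ih =>
      intro hc0 hm
      obtain ⟨hab, hc⟩ := List.isChain_cons_cons.1 hc0
      simp only [List.mem_cons, not_or] at hm
      refine List.Chain.cons ⟨hab, fun h => hm.1 h.symm, fun h => hm.2.1 h.symm⟩ ?_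
      exact ih b hc (by simp only [List.mem_cons, not_or]; exact ⟨hm.2.1, hm.2.2⟩)
  exact List.relationReflTransGen_of_exists_isChain_cons l (key s l h1 hu) h2

lemma path_of_reachAvoid (hus : u ≠ s) (h : ReachAvoid g u s w) :
    ∃ P, GoodPath g s w P ∧ u ∉ P := by
  obtain ⟨l, hl, hlast⟩ := List.exists_isChain_cons_of_relationReflTransGen h
  refine ⟨s :: l, ⟨hl.imp fun a b hab => hab.1, rfl, ?_⟩, ?_⟩
  · rw [List.getLast?_eq_getLast (l := s :: l) (List.cons_ne_nil _ _), hlast]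
  · have : ∀ i ∈ l, i ≠ u := by
      have h' := List.IsChain.induction (fun x => x ≠ u) (s :: l) hl
        (fun x y hxy _ => hxy.2.2) (fun _ => Ne.symm hus)
      exact fun i hi => h' i (List.mem_cons_of_mem _ hi)
    simp only [List.mem_cons, not_or]
    exact ⟨fun hs => hus hs, fun hm => (this u hm) rfl⟩

lemma not_reachAvoid_self_source (hws : w ≠ s) : ¬ ReachAvoid g s s w := by
  intro h
  rcases Relation.ReflTransGen.cases_head h with rfl | ⟨c, ⟨-, hss, -⟩, -⟩
  · exact hws rfl
  · exact hss rfl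

lemma not_reachAvoid_target (hus : u ≠ s) : ¬ ReachAvoid g u s u := by
  intro h
  rcases Relation.ReflTransGen.cases_tail h with h' | ⟨c, -, -, -, huu⟩
  · exact hus h'
  · exact huu rfl

lemma paths_of_dominates (h : Dominates g s u w) :
    ∀ P, GoodPath g s w P → u ∈ P := by
  intro P hP
  rcases h.2 with rfl | hn
  · exact List.mem_of_getLast? hP.2.2
  · by_contra hm
    exact hn (reachAvoid_of_path hP hm)

lemma dominates_of_paths (hr : Reach g s w)
    (h : ∀ P, GoodPath g s w P → u ∈ P) : Dominates g s u w := by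
  refine ⟨hr, ?_⟩
  by_cases huw : u = w
  · exact Or.inl huw
  right
  intro hra
  by_cases hus' : u = s
  · subst hus'
    exact not_reachAvoid_self_source (fun hsw => huw hsw.symm) hra
  · obtain ⟨P, hP, hm⟩ := path_of_reachAvoid hus' hra
    exact hm (h P hP)

lemma GoodPath.path_prefix {A B : List V} {x : V} (h : GoodPath g s w (A ++ x :: B)) :
    GoodPath g s x (A ++ [x]) := by
  refine ⟨h.1.prefix ⟨B, by simp⟩, ?_, by simp [List.getLast?_concat]⟩
  cases A with
  | nil => simpa using h.2.1
  | cons a A' => simpa using h.2.1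

lemma GoodPath.path_append {Q B : List V} {d : V} (hQ : GoodPath g s d Q)
    (hc : List.Chain' g (d :: B)) (hB : B ≠ [])
    (hlast : (d :: B).getLast? = some w) : GoodPath g s w (Q ++ B) := by
  obtain ⟨l, rfl⟩ := goodPath_exists_cons hQ
  refine ⟨?_, by simp, ?_⟩
  · refine List.isChain_append.2 ⟨hQ.1, (List.isChain_cons.1 hc).2, ?_⟩
    intro x hx y hy
    have hxd : x = d := by
      have := hQ.2.2
      rw [this] at hx
      exact Option.some.injEq _ _ ▸ hx.symm ▸ rfl
    subst hxd
    exact (List.isChain_cons.1 hc).1 y hy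
  · rw [List.getLast?_append_of_ne_nil _ hB]
    rw [show (d :: B) = [d] ++ B by rfl, List.getLast?_append_of_ne_nil _ hB] at hlast
    exact hlast

lemma exists_last_sat {p : V → Prop} :
    ∀ (L : List V), (∃ x ∈ L, p x) →
      ∃ A d B, L = A ++ d :: B ∧ p d ∧ ∀ x ∈ B, ¬ p x := by
  intro L
  induction L with
  | nil => rintro ⟨x, hx, -⟩; simp at hx
  | cons a L ih =>
    intro h
    by_cases hL : ∃ x ∈ L, p x
    · obtain ⟨A, d, B, rfl, hd, hB⟩ := ih hL
      exact ⟨a :: A, d, B, rfl, hd, hB⟩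
    · have hpa : p a := by
        rcases h with ⟨x, hx, hpx⟩
        rcases List.mem_cons.1 hx with rfl | hx
        · exact hpx
        · exact absurd ⟨x, hx, hpx⟩ hL
      exact ⟨[], a, L, rfl, hpa, fun x hx hpx => hL ⟨x, hx, hpx⟩⟩

lemma dominates_source (hr : Reach g s w) : Dominates g s s w := by
  by_cases h : w = s
  · exact ⟨hr, Or.inl h.symm⟩
  · exact ⟨hr, Or.inr (not_reachAvoid_self_source h)⟩

lemma dominates_trans {a b c : V} (h1 : Dominates g s a b) (h2 : Dominates g s b c) :
    Dominates g s a c := by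
  refine dominates_of_paths h2.1 ?_
  intro P hP
  have hb : b ∈ P := paths_of_dominates h2 P hP
  obtain ⟨A, B, rfl⟩ := List.append_of_mem hb
  have hpre : GoodPath g s b (A ++ [b]) := hP.path_prefix
  have ha : a ∈ A ++ [b] := paths_of_dominates h1 _ hpre
  simp only [List.mem_append, List.mem_singleton, List.mem_cons] at ha ⊢
  tauto

lemma dominates_antisymm {a b : V} (h1 : Dominates g s a b) (h2 : Dominates g s b a) :
    a = b := by
  by_contra hne
  have key : ∀ n (P : List V), P.length ≤ n → GoodPath g s b P → False := by
    intro n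
    induction n using Nat.strong_induction_on with
    | _ n ih =>
      intro P hlen hP
      have ha : a ∈ P := paths_of_dominates h1 P hP
      obtain ⟨A, B, rfl⟩ := List.append_of_mem ha
      have hpre : GoodPath g s a (A ++ [a]) := hP.path_prefix
      have hb : b ∈ A ++ [a] := paths_of_dominates h2 _ hpre
      have hbA : b ∈ A := by
        rcases List.mem_append.1 hb with h | h
        · exact h
        · simp only [List.mem_singleton] at h
          exact absurd h.symm hne
      obtain ⟨A1, A2, rfl⟩ := List.append_of_mem hbA
      have heq : (A1 ++ b :: A2) ++ a :: B = A1 ++ b :: (A2 ++ a :: B) := by simp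
      have hgp2 : GoodPath g s b (A1 ++ [b]) := GoodPath.path_prefix (heq ▸ hP)
      have hlt : (A1 ++ [b]).length < n := by
        have : (A1 ++ [b]).length < ((A1 ++ b :: A2) ++ a :: B).length := by
          simp
        omega
      exact ih _ hlt _ le_rfl hgp2
  obtain ⟨P, hP⟩ := path_of_reach h1.1
  exact key P.length P le_rfl hP

lemma exists_isIdom (hw : Reach g s w) (hws : w ≠ s) : ∃ d, IsIdom g s d w := by
  obtain ⟨P, hP⟩ := path_of_reach hw
  have hsP : s ∈ P := by
    obtain ⟨l, rfl⟩ := goodPath_exists_cons hP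
    exact List.mem_cons_self
  obtain ⟨A, d, B, hPd, hd, hB⟩ :=
    exists_last_sat (p := fun x => Dominates g s x w ∧ x ≠ w) P
      ⟨s, hsP, dominates_source hw, fun h => hws h.symm⟩
  obtain ⟨hdw, hdnw⟩ := hd
  rw [hPd] at hP
  have hpre : GoodPath g s d (A ++ [d]) := hP.path_prefix
  have hBne : B ≠ [] := by
    rintro rfl
    have := hP.2.2
    simp only [List.getLast?_concat] at this
    exact hdnw (Option.some.injEq _ _ ▸ this)
  have hcB : List.Chain' g (d :: B) := hP.1.suffix ⟨A, rfl⟩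
  have hlastB : (d :: B).getLast? = some w := by
    have := hP.2.2
    rwa [show A ++ d :: B = A ++ (d :: B) by rfl,
      List.getLast?_append_of_ne_nil _ (List.cons_ne_nil _ _)] at this
  refine ⟨d, hdw, hdnw, ?_⟩
  intro x hx hxw
  refine dominates_of_paths (reach_of_path hpre) ?_
  intro Q hQ
  have hcomb : GoodPath g s w (Q ++ B) := hQ.path_append hcB hBne hlastB
  have hxQ : x ∈ Q ++ B := paths_of_dominates hx _ hcomb
  rcases List.mem_append.1 hxQ with h | h
  · exact h
  · exact absurd ⟨hx, hxw⟩ (hB x h)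

lemma domSubtree_of_dominates [Fintype V] (hus : u ≠ s) (hreach : Reach g s u) :
    ∀ n (w : V), (Finset.univ.filter fun x => Dominates g s x w).card ≤ n →
      Dominates g s u w → InDomSubtree g s u w := by
  intro n
  induction n with
  | zero =>
    intro w hcard hd
    exfalso
    have hmem : u ∈ Finset.univ.filter fun x => Dominates g s x w := by
      simp [hd]
    have := Finset.card_pos.2 ⟨u, hmem⟩
    omega
  | succ n ih =>
    intro w hcard hd
    by_cases huw : u = w
    · subst huw; exact Relation.ReflTransGen.refl
    · have hws : w ≠ s := by
        rintro rfl
        rcases hd.2 with h | h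
        · exact hus h
        · exact h Relation.ReflTransGen.refl
      obtain ⟨d, hidom⟩ := exists_isIdom hd.1 hws
      have hud : Dominates g s u d := hidom.2.2 u hd huw
      have hsub : (Finset.univ.filter fun x => Dominates g s x d) ⊂
          (Finset.univ.filter fun x => Dominates g s x w) := by
        constructor
        · intro x hx
          simp only [Finset.mem_filter, Finset.mem_univ, true_and] at hx ⊢
          exact dominates_trans hx hidom.1
        · intro hsup
          have hwmem : w ∈ Finset.univ.filter fun x => Dominates g s x w := by
            simp only [Finset.mem_filter, Finset.mem_univ, true_and]
            exact ⟨hd.1, Or.inl rfl⟩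
          have := hsup hwmem
          simp only [Finset.mem_filter, Finset.mem_univ, true_and] at this
          exact hidom.2.1 (dominates_antisymm hidom.1 this)
      have hlt := Finset.card_lt_card hsub
      exact Relation.ReflTransGen.tail (ih d (by omega) hud) hidom

lemma dominates_of_domSubtree (hreach : Reach g s u) {v : V}
    (h : InDomSubtree g s u v) : Dominates g s u v := by
  induction h with
  | refl => exact ⟨hreach, Or.inl rfl⟩
  | tail hab hr ih => exact dominates_trans ih hr.1

end Aux

/-- for any vertex `u ≠ s` reachable from the source, the number
of vertices `w` reachable from `s` such that every path from `s` to `w` passes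
through `u` equals the number of vertices in the subtree rooted at `u` of the
dominator tree of `g`. -/
theorem card_through_eq_card_domSubtree [Fintype V] (g : V → V → Prop)
    (s u : V) (hus : u ≠ s) (hreach : Reach g s u) :
    (Finset.univ.filter fun w => Reach g s w ∧ ¬ ReachAvoid g u s w).card =
      (Finset.univ.filter fun v => InDomSubtree g s u v).card := by
  congr 1
  apply Finset.filter_congr
  intro w _
  constructor
  · rintro ⟨hr, hra⟩
    exact domSubtree_of_dominates hus hreach _ w le_rfl ⟨hr, Or.inr hra⟩
  · intro h
    have hd := dominates_of_domSubtree hreach h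
    refine ⟨hd.1, ?_⟩
    rcases hd.2 with rfl | h2
    · exact not_reachAvoid_target hus
    · exact h2
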